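/- A collection A ⊆ ω^ω of increasing functions is unbounded in the eventual domination order if and only if the set X = {f ∈ ω^ω : some g ∈ A eventually dominates f} is nonmeager in the Baire space ω^ω. -/

import Mathlib

open Filter Set

lemma cylinder_isOpen (t : ℕ → ℕ) (n : ℕ) : IsOpen {f : ℕ → ℕ | ∀ i < n, f i = t i} := by
  have : {f : ℕ → ℕ | ∀ i < n, f i = t i}
      = (↑(Finset.range n) : Set ℕ).pi (fun i => {t i}) := by
    ext f
    simp [Set.mem_pi]
  rw [this]
  exact isOpen_set_pi (Finset.range n).finite_toSet (fun a _ => isOpen_discrete _)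

lemma ext_one (F : Set (ℕ → ℕ)) (hFc : IsClosed F) (hFi : interior F = ∅)
    (t : ℕ → ℕ) (m : ℕ) :
    ∃ (m' : ℕ) (σ : ℕ → ℕ), m ≤ m' ∧ (∀ i < m, σ i = t i) ∧
      ∀ f : ℕ → ℕ, (∀ i < m', f i = σ i) → f ∉ F := by
  have hdense : Dense Fᶜ := interior_eq_empty_iff_dense_compl.mp hFi
  obtain ⟨g, hgc, hgF⟩ := hdense.inter_open_nonempty _ (cylinder_isOpen t m)
    ⟨t, fun i _ => rfl⟩
  obtain ⟨I, u, hu, hsub⟩ := isOpen_pi_iff.mp (isOpen_compl_iff.mpr hFc) g hgF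
  refine ⟨max m (I.sup id + 1), g, le_max_left _ _, hgc, ?_⟩
  intro f hf hfF
  have : f ∈ (↑I : Set ℕ).pi u := by
    intro a ha
    have : f a = g a := hf a (lt_of_lt_of_le (Nat.lt_succ_of_le (Finset.le_sup (f := id) ha))
      (le_max_right _ _))
    rw [this]
    exact (hu a ha).2
  exact hsub this hfF

lemma ext_finset (F : Set (ℕ → ℕ)) (hFc : IsClosed F) (hFi : interior F = ∅)
    (n : ℕ) (T : Finset (ℕ → ℕ)) :
    ∀ (t : ℕ → ℕ) (m : ℕ), n ≤ m →
    ∃ (m' : ℕ) (σ : ℕ → ℕ), m ≤ m' ∧ (∀ i < m, σ i = t i) ∧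
      ∀ s ∈ T, ∀ f : ℕ → ℕ, (∀ i < n, f i = s i) →
        (∀ i, n ≤ i → i < m' → f i = σ i) → f ∉ F := by
  classical
  induction T using Finset.induction_on with
  | empty => exact fun t m hm => ⟨m, t, le_refl _, fun _ _ => rfl, by simp⟩
  | @insert s T hs ih =>
    intro t m hm
    obtain ⟨m₁, σ₁, hm₁, hσ₁, hT⟩ := ih t m hm
    obtain ⟨m₂, σ₂, hm₂, hσ₂, hone⟩ :=
      ext_one F hFc hFi (fun i => if i < n then s i else σ₁ i) m₁
    refine ⟨m₂, fun i => if i < n then σ₁ i else σ₂ i, le_trans hm₁ hm₂, ?_, ?_⟩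
    · intro i hi
      by_cases hin : i < n
      · simp only [if_pos hin]; exact hσ₁ i hi
      · simp only [if_neg hin]
        rw [hσ₂ i (lt_of_lt_of_le hi hm₁)]
        simp only [if_neg hin]
        exact hσ₁ i hi
    · intro s' hs' f hfs hfσ
      rcases Finset.mem_insert.mp hs' with rfl | hs'T
      · refine hone f ?_
        intro i hi
        by_cases hin : i < n
        · rw [hfs i hin, hσ₂ i (lt_of_lt_of_le hin (le_trans hm hm₁)), if_pos hin]
        · have h1 := hfσ i (le_of_not_gt hin) hi
          simp only [if_neg hin] at h1
          exact h1
      · refine hT s' hs'T f hfs ?_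
        intro i hin him₁
        have h1 := hfσ i hin (lt_of_lt_of_le him₁ hm₂)
        simp only [if_neg (not_lt_of_ge hin)] at h1
        rw [h1, hσ₂ i him₁]
        simp only [if_neg (not_lt_of_ge hin)]

lemma interior_union_empty {X : Type*} [TopologicalSpace X] {A B : Set X}
    (hA : IsClosed A) (hiA : interior A = ∅) (hiB : interior B = ∅) :
    interior (A ∪ B) = ∅ := by
  have h1 : interior (A ∪ B) \ A ⊆ interior B := by
    apply interior_maximal
    · intro x hx
      rcases (interior_subset hx.1) with h | h
      · exact absurd h hx.2
      · exact h
    · exact isOpen_interior.sdiff hA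
  rw [hiB] at h1
  rw [Set.diff_subset_iff] at h1
  have h1 : interior (A ∪ B) ⊆ A := by
    intro x hx; rcases h1 hx with h|h
    · exact h
    · exact absurd h (Set.notMem_empty x)
  have h2 : interior (A ∪ B) ⊆ interior A := interior_maximal h1 isOpen_interior
  rw [hiA] at h2
  exact Set.eq_empty_of_subset_empty h2

lemma meagre_bounded (h : ℕ → ℕ) : IsMeagre {f : ℕ → ℕ | ∀ᶠ n in atTop, f n ≤ h n} := by
  have heq : {f : ℕ → ℕ | ∀ᶠ n in atTop, f n ≤ h n}
      = ⋃ N, {f : ℕ → ℕ | ∀ n, N ≤ n → f n ≤ h n} := by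
    ext f
    simp [eventually_atTop]
  rw [heq]
  apply isMeagre_iUnion
  intro N
  have hclosed : IsClosed {f : ℕ → ℕ | ∀ n, N ≤ n → f n ≤ h n} := by
    have : {f : ℕ → ℕ | ∀ n, N ≤ n → f n ≤ h n}
        = ⋂ n, {f : ℕ → ℕ | N ≤ n → f n ≤ h n} := by ext f; simp
    rw [this]
    apply isClosed_iInter
    intro n
    by_cases hn : N ≤ n
    · have : {f : ℕ → ℕ | N ≤ n → f n ≤ h n} = (fun f : ℕ → ℕ => f n) ⁻¹' (Set.Iic (h n)) := by
        ext f; simp [hn]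
      rw [this]
      exact (isClosed_discrete _).preimage (continuous_apply n)
    · have : {f : ℕ → ℕ | N ≤ n → f n ≤ h n} = Set.univ := by
        ext f; simp [hn]
      rw [this]; exact isClosed_univ
  have hint : interior {f : ℕ → ℕ | ∀ n, N ≤ n → f n ≤ h n} = ∅ := by
    rw [Set.eq_empty_iff_forall_notMem]
    intro f hf
    obtain ⟨I, u, hu, hsub⟩ := isOpen_pi_iff.mp isOpen_interior f hf
    set m := I.sup id + N + 1 with hm
    have hmI : m ∉ I := by
      intro hmem
      have := Finset.le_sup (f := id) hmem
      simp only [id] at this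
      omega
    have hmN : N ≤ m := by omega
    set f' : ℕ → ℕ := fun i => if i = m then h m + 1 else f i with hf'
    have hf'mem : f' ∈ (↑I : Set ℕ).pi u := by
      intro a ha
      have : f' a = f a := by
        simp only [hf']
        rw [if_neg]
        intro heq2; exact hmI (heq2 ▸ ha)
      rw [this]
      exact (hu a ha).2
    have := interior_subset (hsub hf'mem) m hmN
    simp only [hf', if_pos rfl] at this
    omega
  rw [isMeagre_iff_countable_union_isNowhereDense]
  refine ⟨{{f : ℕ → ℕ | ∀ n, N ≤ n → f n ≤ h n}}, ?_, countable_singleton _, by simp⟩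
  intro t ht
  rw [Set.mem_singleton_iff] at ht
  subst ht
  exact hclosed.isNowhereDense_iff.mpr hint
lemma step_lemma (G : ℕ → Set (ℕ → ℕ)) (hGc : ∀ j, IsClosed (G j))
    (hGi : ∀ j, interior (G j) = ∅) :
    ∀ (k n : ℕ) (τ : ℕ → ℕ), ∃ (n' : ℕ) (σ : ℕ → ℕ), n < n' ∧ (∀ i < n, σ i = τ i) ∧
      ∀ f : ℕ → ℕ, (∀ i < n, f i ≤ (Finset.range n).sup τ) →
        (∀ i, n ≤ i → i < n' → f i = σ i) → ∀ j ≤ k, f ∉ G j := by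
  intro k n τ
  have hU : ∀ k, IsClosed (⋃ j ∈ Finset.range (k+1), G j) ∧
      interior (⋃ j ∈ Finset.range (k+1), G j) = ∅ := by
    intro k
    induction k with
    | zero =>
      have he : (⋃ j ∈ Finset.range (0+1), G j) = G 0 := by simp
      rw [he]
      exact ⟨hGc 0, hGi 0⟩
    | succ k ih =>
      rw [Finset.range_add_one, Finset.set_biUnion_insert]
      exact ⟨(hGc _).union ih.1, interior_union_empty (hGc _) (hGi _) ih.2⟩
  classical
  set B := (Finset.range n).sup τ with hB
  set T : Finset (ℕ → ℕ) := (Finset.univ : Finset (Fin n → Fin (B+1))).image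
    (fun v i => if h : i < n then (v ⟨i, h⟩ : ℕ) else 0) with hT
  obtain ⟨m', σ, hm', hσ, hkey⟩ := ext_finset _ (hU k).1 (hU k).2 n T τ n (le_refl n)
  refine ⟨m'+1, σ, by omega, hσ, ?_⟩
  intro f hfb hfσ j hj hfG
  have hfB : ∀ i, i < n → f i < B + 1 := fun i h => Nat.lt_succ_of_le (hfb i h)
  set v : Fin n → Fin (B+1) := fun i => ⟨f i, hfB i.1 i.2⟩ with hv
  set s : ℕ → ℕ := fun i => if h : i < n then (v ⟨i, h⟩ : ℕ) else 0 with hs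
  have hsT : s ∈ T := Finset.mem_image.mpr ⟨v, Finset.mem_univ v, rfl⟩
  have hres := hkey s hsT f (fun i hi => by simp [hs, hv, hi])
    (fun i hni him => hfσ i hni (by omega))
  exact hres (Set.mem_biUnion (Finset.mem_range.mpr (by omega)) hfG)

/-- A collection `A` of increasing functions in `ω^ω` is unbounded in the eventual
domination order iff the set `X` of functions eventually dominated by some member of `A`
is nonmeager in the Baire space `ω^ω`. -/
theorem unbounded_iff_dominated_set_nonmeager (A : Set (ℕ → ℕ))
    (hA : ∀ f ∈ A, Monotone f) :
    (¬ ∃ h : ℕ → ℕ, ∀ f ∈ A, ∀ᶠ n in atTop, f n ≤ h n) ↔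
      ¬ IsMeagre {f : ℕ → ℕ | ∃ g ∈ A, ∀ᶠ n in atTop, f n ≤ g n} := by
  rw [not_iff_not]
  constructor
  · rintro ⟨h, hb⟩
    refine (meagre_bounded h).mono ?_
    rintro f ⟨g, hg, hfg⟩
    exact (hfg.and (hb g hg)).mono fun n ⟨h1, h2⟩ => le_trans h1 h2
  · intro hm
    obtain ⟨S, hSn, hSc, hsub⟩ := isMeagre_iff_countable_union_isNowhereDense.mp hm
    obtain ⟨F, hF⟩ := (hSc.insert ∅).exists_eq_range (Set.insert_nonempty _ _)
    have hFn : ∀ j, IsNowhereDense (F j) := by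
      intro j
      have hmem : F j ∈ insert ∅ S := hF ▸ Set.mem_range_self j
      rcases Set.mem_insert_iff.mp hmem with h | h
      · rw [h]; exact isNowhereDense_empty
      · exact hSn _ h
    set G : ℕ → Set (ℕ → ℕ) := fun j => closure (F j) with hG
    have hGc : ∀ j, IsClosed (G j) := fun j => isClosed_closure
    have hGi : ∀ j, interior (G j) = ∅ := fun j => hFn j
    choose nf sf hlt hcoh hkey using step_lemma G hGc hGi
    set p : ℕ → ℕ × (ℕ → ℕ) := fun k =>
      Nat.rec ((0:ℕ), fun _ => (0:ℕ)) (fun k ih => (nf k ih.1 ih.2, sf k ih.1 ih.2)) k with hp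
    set N : ℕ → ℕ := fun k => (p k).1 with hN
    set xs : ℕ → ℕ → ℕ := fun k => (p k).2 with hxs
    have hN0 : N 0 = 0 := rfl
    have hNsucc : ∀ k, N (k+1) = nf k (N k) (xs k) := fun k => rfl
    have hxssucc : ∀ k, xs (k+1) = sf k (N k) (xs k) := fun k => rfl
    have hNmono : StrictMono N :=
      strictMono_nat_of_lt_succ (fun k => by rw [hNsucc]; exact hlt k (N k) (xs k))
    have hNk : ∀ k, k ≤ N k := fun k => hNmono.le_apply
    have hagree : ∀ k k', k ≤ k' → ∀ m, m < N k → xs k' m = xs k m := by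
      intro k k' hkk'
      induction hkk' with
      | refl => exact fun m _ => rfl
      | @step k' hk ih =>
        intro m hm
        rw [hxssucc k']
        rw [hcoh k' (N k') (xs k') m (lt_of_lt_of_le hm (hNmono.monotone hk))]
        exact ih m hm
    set x : ℕ → ℕ := fun m => xs (m+1) m with hx
    have hxeq : ∀ k m, m < N k → x m = xs k m := by
      intro k m hm
      rcases le_total k (m+1) with h | h
      · exact hagree k (m+1) h m hm
      · exact (hagree (m+1) k h m (lt_of_lt_of_le (Nat.lt_succ_self m) (hNk (m+1)))).symm
    have hkey' : ∀ k (f : ℕ → ℕ), (∀ i < N k, f i ≤ (Finset.range (N k)).sup x) →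
        (∀ i, N k ≤ i → i < N (k+1) → f i = x i) → ∀ j ≤ k, f ∉ G j := by
      intro k f hfb hfx
      have hsup : (Finset.range (N k)).sup x = (Finset.range (N k)).sup (xs k) :=
        Finset.sup_congr rfl (fun i hi => hxeq k i (Finset.mem_range.mp hi))
      apply hkey k (N k) (xs k) f (fun i hi => hsup ▸ hfb i hi)
      intro i hni hilt
      have h1 : i < N (k+1) := hilt
      rw [← hxssucc k, ← hxeq (k+1) i h1]
      exact hfx i hni h1
    set h : ℕ → ℕ := fun m => (Finset.range (N (m+2))).sup x with hh
    by_contra hub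
    push_neg at hub
    obtain ⟨g, hg, hng⟩ := hub h
    have hfreq : ∀ M, ∃ m, M ≤ m ∧ h m < g m := by
      intro M
      obtain ⟨m, hm1, hm2⟩ := (frequently_atTop.mp hng) M
      exact ⟨m, hm1, hm2⟩
    set f : ℕ → ℕ := fun i => if x i ≤ g i then x i else 0 with hfdef
    have hfle : ∀ i, f i ≤ x i ∧ f i ≤ g i := by
      intro i
      by_cases h' : x i ≤ g i
      · simp [hfdef, h']
      · simp [hfdef, h']
    have hfX : f ∈ {f : ℕ → ℕ | ∃ g ∈ A, ∀ᶠ n in atTop, f n ≤ g n} :=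
      ⟨g, hg, Eventually.of_forall (fun i => (hfle i).2)⟩
    obtain ⟨s, hsS, hfs⟩ := hsub hfX
    have hsR : s ∈ Set.range F := hF ▸ Set.mem_insert_of_mem _ hsS
    obtain ⟨j, rfl⟩ := hsR
    have hfG : f ∈ G j := subset_closure hfs
    obtain ⟨m, hm1, hm2⟩ := hfreq (N j)
    have hfind : ∀ m : ℕ, ∃ k, N k ≤ m ∧ m < N (k+1) := by
      intro m
      induction m with
      | zero =>
        refine ⟨0, le_of_eq hN0, ?_⟩
        have h01 : N 0 < N (0+1) := hNmono (show 0 < 0+1 by omega)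
        omega
      | succ m ih =>
        obtain ⟨k, h1, h2⟩ := ih
        by_cases hc : m + 1 < N (k+1)
        · exact ⟨k, by omega, hc⟩
        · have h3 : N (k+1) < N (k+1+1) := hNmono (show k+1 < k+1+1 by omega)
          exact ⟨k+1, by omega, by omega⟩
    obtain ⟨k, hk1, hk2⟩ := hfind m
    have hjk : j ≤ k := by
      by_contra hc
      push_neg at hc
      have := hNmono.monotone (show k + 1 ≤ j by omega)
      omega
    have hkm : k ≤ m := le_trans (hNk k) hk1
    have hdom : ∀ i, N (k+1) ≤ i → i < N (k+2) → x i ≤ g i := by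
      intro i hi1 hi2
      have hmi : m ≤ i := le_of_lt (lt_of_lt_of_le hk2 hi1)
      have hgi : g m ≤ g i := hA g hg hmi
      have hxi : x i ≤ h m := by
        have h5 : i < N (m+2) := lt_of_lt_of_le hi2 (hNmono.monotone (show k+2 ≤ m+2 by omega))
        exact Finset.le_sup (Finset.mem_range.mpr h5)
      omega
    refine absurd hfG (hkey' (k+1) f ?_ ?_ j (by omega))
    · intro i hi
      exact le_trans (hfle i).1 (Finset.le_sup (Finset.mem_range.mpr hi))
    · intro i hi1 hi2
      have := hdom i hi1 hi2
      simp [hfdef, this]
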